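/- Let g ∈ S_{2m} be the product of two disjoint cycles of equal length m, say g = (α_1 α_2 ⋯ α_m)(β_1 β_2 ⋯ β_m). If σ is a matching on the 2m points {α_1,…,α_m,β_1,…,β_m} that commutes with g, then either σ = g^{m/2} (which requires m to be even), or there exists j with 1 ≤ j ≤ m such that σ = (α_1 β_j)(α_2 β_{j+1})(α_3 β_{j+2}) ⋯ (α_m β_{j-1}), where the indices of the β's are taken cyclically modulo m. -/

import Mathlib

/-- A matching on a set is a fixed-point-free involution. -/
def IsMatching {X : Type*} (τ : Equiv.Perm X) : Prop :=
  τ * τ = 1 ∧ ∀ x, τ x ≠ x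

/-- The number of matchings commuting with a given permutation. -/
noncomputable def matchingCount {X : Type*} (g : Equiv.Perm X) : ℕ :=
  Nat.card {τ : Equiv.Perm X // IsMatching τ ∧ Commute g τ}

open Fin.NatCast Fin.CommRing

/-- In `Fin m`, if `j + j = 0` and `j ≠ 0` then `2 * j.val = m`. -/
lemma two_val_eq {m : ℕ} [NeZero m] {j : Fin m} (h : j + j = 0) (hj : j ≠ 0) :
    2 * j.val = m := by
  have h0 : (j + j).val = 0 := by rw [h]; simp
  rw [Fin.add_def] at h0
  have hd : m ∣ j.val + j.val := Nat.dvd_of_mod_eq_zero h0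
  have hlt : j.val + j.val < 2 * m := by have := j.isLt; omega
  have hpos : 0 < j.val := Nat.pos_of_ne_zero (fun h => hj (Fin.ext h))
  obtain ⟨c, hc⟩ := hd
  have hm := NeZero.pos m
  have hc2 : c < 2 := by nlinarith
  interval_cases c <;> omega

/-- Let `g` be the product of two disjoint cycles of equal length `m`,
say `g = (α_1 ⋯ α_m)(β_1 ⋯ β_m)`, on the `2m` points `{α_1,…,α_m,β_1,…,β_m}`.
If `σ` is a matching on these points commuting with `g`, then either `σ = g^{m/2}`
(which requires `m` even), or `σ = (α_1 β_j)(α_2 β_{j+1}) ⋯ (α_m β_{j-1})` for some `j`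
(indices of the `β`'s cyclic mod `m`).  Here the two cycles are encoded (0-indexed) by
`α β : Fin m → X` with `Sum.elim α β` bijective. -/
theorem stmt6 (m : ℕ) [NeZero m] (X : Type*) [Fintype X] [DecidableEq X]
    (α β : Fin m → X) (hbij : Function.Bijective (Sum.elim α β))
    (g : Equiv.Perm X)
    (hgα : ∀ i, g (α i) = α (i + 1)) (hgβ : ∀ i, g (β i) = β (i + 1))
    (σ : Equiv.Perm X) (hσ : IsMatching σ) (hcomm : Commute g σ) :
    (Even m ∧ σ = g ^ (m / 2)) ∨ ∃ j : Fin m, ∀ k : Fin m, σ (α k) = β (k + j) := by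
  obtain ⟨hσ2, hσfix⟩ := hσ
  have hαinj : Function.Injective α := fun i i' h => by
    have := hbij.injective (a₁ := Sum.inl i) (a₂ := Sum.inl i') h
    simpa using this
  have hβinj : Function.Injective β := fun i i' h => by
    have := hbij.injective (a₁ := Sum.inr i) (a₂ := Sum.inr i') h
    simpa using this
  have hαβ : ∀ i k, α i ≠ β k := fun i k h => by
    have := hbij.injective (a₁ := Sum.inl i) (a₂ := Sum.inr k) h
    simp at this
  have gpowα : ∀ (n : ℕ) (i : Fin m), (g ^ n) (α i) = α (i + n) := by
    intro n
    induction n with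
    | zero => intro i; simp
    | succ n ih =>
      intro i
      rw [pow_succ', Equiv.Perm.mul_apply, ih, hgα]
      congr 1
      push_cast
      ring
  have gpowβ : ∀ (n : ℕ) (i : Fin m), (g ^ n) (β i) = β (i + n) := by
    intro n
    induction n with
    | zero => intro i; simp
    | succ n ih =>
      intro i
      rw [pow_succ', Equiv.Perm.mul_apply, ih, hgβ]
      congr 1
      push_cast
      ring
  have hcn : ∀ (n : ℕ) (x : X), σ ((g ^ n) x) = (g ^ n) (σ x) := by
    intro n x
    have := (hcomm.symm.pow_right n).eq
    calc σ ((g ^ n) x) = (σ * g ^ n) x := rfl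
    _ = (g ^ n * σ) x := by rw [this]
    _ = (g ^ n) (σ x) := rfl
  have hσα0 : ∀ k : Fin m, σ (α k) = (g ^ k.val) (σ (α 0)) := by
    intro k
    have : (g ^ k.val) (α 0) = α k := by
      rw [gpowα]; congr 1; simp [Fin.cast_val_eq_self]
    rw [← this, hcn]
  obtain ⟨s, hs⟩ := hbij.surjective (σ (α 0))
  cases s with
  | inr j =>
    right
    refine ⟨j, fun k => ?_⟩
    rw [hσα0, ← hs]
    simp only [Sum.elim_inr]
    rw [gpowβ]
    congr 1
    rw [Fin.cast_val_eq_self]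
    ring
  | inl j =>
    left
    simp only [Sum.elim_inl] at hs
    have hσα : ∀ k : Fin m, σ (α k) = α (k + j) := by
      intro k
      rw [hσα0, ← hs, gpowα, Fin.cast_val_eq_self, add_comm]
    have hjj : j + j = 0 := by
      have h1 : σ (σ (α 0)) = α 0 := by
        have := congrArg (fun f : Equiv.Perm X => f (α 0)) hσ2
        simpa using this
      rw [hσα 0, hσα, zero_add] at h1
      have := hαinj h1
      simpa using this
    have hjne : j ≠ 0 := by
      intro h
      apply hσfix (α 0)
      rw [hσα 0, zero_add, h]
    have h2j := two_val_eq hjj hjne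
    -- β side
    obtain ⟨s', hs'⟩ := hbij.surjective (σ (β 0))
    have hσβ0 : ∀ k : Fin m, σ (β k) = (g ^ k.val) (σ (β 0)) := by
      intro k
      have : (g ^ k.val) (β 0) = β k := by
        rw [gpowβ]; congr 1; simp [Fin.cast_val_eq_self]
      rw [← this, hcn]
    cases s' with
    | inl i =>
      exfalso
      simp only [Sum.elim_inl] at hs'
      have : σ (α (i - j)) = α i := by rw [hσα]; congr 1; ring
      have := σ.injective (this.trans hs')
      exact hαβ _ _ this
    | inr j' =>
      simp only [Sum.elim_inr] at hs'
      have hσβ : ∀ k : Fin m, σ (β k) = β (k + j') := by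
        intro k
        rw [hσβ0, ← hs', gpowβ, Fin.cast_val_eq_self, add_comm]
      have hjj' : j' + j' = 0 := by
        have h1 : σ (σ (β 0)) = β 0 := by
          have := congrArg (fun f : Equiv.Perm X => f (β 0)) hσ2
          simpa using this
        rw [hσβ 0, hσβ, zero_add] at h1
        have := hβinj h1
        simpa using this
      have hjne' : j' ≠ 0 := by
        intro h
        apply hσfix (β 0)
        rw [hσβ 0, zero_add, h]
      have h2j' := two_val_eq hjj' hjne'
      have hj' : j' = j := Fin.ext (by omega)
      have hcast : ((m / 2 : ℕ) : Fin m) = j := by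
        apply Fin.ext
        rw [Fin.val_natCast]
        have : m / 2 = j.val := by omega
        rw [this, Nat.mod_eq_of_lt j.isLt]
      constructor
      · exact ⟨j.val, by omega⟩
      · apply Equiv.ext
        intro x
        obtain ⟨t, ht⟩ := hbij.surjective x
        cases t with
        | inl i =>
          simp only [Sum.elim_inl] at ht
          rw [← ht, hσα, gpowα, hcast, add_comm]
        | inr i =>
          simp only [Sum.elim_inr] at ht
          rw [← ht, hσβ, gpowβ, hcast, hj', add_comm]
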